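/- Let ι denote coefficientwise Laurent expansion at q = 0, mapping ℚ(q)((t)) into ℚ((q))((t)). Define φ₀,₁(q⁻¹t, t) := 12 · ℘(q⁻¹t, t) · ι(φ₋₂,₁(q⁻¹t, t)) ∈ ℚ((q))((t)), where φ₋₂,₁(q⁻¹t,t) and ℘(q⁻¹t,t) are the series obtained from the defining product of φ₋₂,₁ and the defining expansion of ℘ by substituting q ↦ q⁻¹t. Then φ₀,₁(q⁻¹t, t) = q² t⁻¹ · ι(φ₀,₁(q, t)). -/

import Mathlib

noncomputable section

open PowerSeries
set_option maxRecDepth 8000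

/-- The field `ℚ(q)` of rational functions in `q`. -/
abbrev K : Type := RatFunc ℚ

/-- The variable `q ∈ ℚ(q)`. -/
def q : K := RatFunc.X

/-- `s = q + 2 + q⁻¹`. -/
def s : K := q + 2 + q⁻¹

/-- The `m`-th factor of the infinite product defining `φ_{-2,1}`. -/
def phiFactor (m : ℕ) : PowerSeries K :=
  (1 + C q * X ^ m) ^ 2 * (1 + C q⁻¹ * X ^ m) ^ 2 * ((1 - X ^ m)⁻¹) ^ 4

/-- The infinite product `∏_{m ≥ 1} (1 + q tᵐ)² (1 + q⁻¹ tᵐ)² (1 - tᵐ)⁻⁴`, convergent in the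
`t`-adic topology: the coefficient of `t^d` equals that of any partial product
`∏_{m=1}^{N}` with `N ≥ d`, since the `m`-th factor is `≡ 1 mod t^m`. -/
def phiProd : PowerSeries K :=
  PowerSeries.mk fun d => coeff d (∏ m ∈ Finset.Icc 1 d, phiFactor m)

/-- The weak Jacobi form `φ_{-2,1}(q,t)` of weight `-2` and index `1`. -/
def phi : PowerSeries K := C s * phiProd

/-- The Weierstraß elliptic function expansion
`℘(q,t) = -1/12 + q/(1+q)² - ∑_{d≥1} (∑_{m|d} m((-q)^m - 2 + (-q)^{-m})) t^d`. -/
def wp : PowerSeries K :=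
  PowerSeries.mk fun d =>
    if d = 0 then -(1 / 12) + q / (1 + q) ^ 2
    else -∑ m ∈ d.divisors, (m : K) * ((-q) ^ (m : ℤ) - 2 + (-q) ^ (-(m : ℤ)))

/-- The weak Jacobi form `φ_{0,1}(q,t) = 12 ℘(q,t) φ_{-2,1}(q,t)` of weight `0` and index `1`. -/
def phi01 : PowerSeries K := 12 * wp * phi


/-- The `m`-th factor of the product defining `φ_{-2,1}(q⁻¹t, t)`, obtained from the `m`-th
factor of the product defining `φ_{-2,1}` by substituting `q ↦ q⁻¹t`. -/
def phiSubFactor (m : ℕ) : PowerSeries K :=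
  (1 + C q⁻¹ * X ^ (m + 1)) ^ 2 * (1 + C q * X ^ (m - 1)) ^ 2 * ((1 - X ^ m)⁻¹) ^ 4

/-- The infinite product `∏_{m ≥ 1} (1 + q⁻¹t^{m+1})² (1 + q t^{m-1})² (1 - t^m)⁻⁴`, convergent
in the `t`-adic topology: the coefficient of `t^d` equals that of any partial product
`∏_{m=1}^{N}` with `N ≥ d + 1`, since the `m`-th factor is `≡ 1 mod t^{m-1}`. -/
def phiSubProd : PowerSeries K :=
  PowerSeries.mk fun d => coeff d (∏ m ∈ Finset.Icc 1 (d + 1), phiSubFactor m)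

/-- The series `φ_{-2,1}(q⁻¹t, t) ∈ ℚ(q)((t))`. -/
def phiSub : LaurentSeries K :=
  (HahnSeries.single (1 : ℤ) q⁻¹ + 2 + HahnSeries.single (-1 : ℤ) q) *
    HahnSeries.ofPowerSeries ℤ K phiSubProd

/-- The `t^e`-coefficient of `℘(q⁻¹t, t)`, obtained from the defining expansion of `℘` by
substituting `q ↦ q⁻¹t` and regrouping by powers of `t` (each `t`-coefficient a convergent
Laurent series in `q`). -/
def wpSubCoeff (e : ℕ) : LaurentSeries ℚ :=
  if e = 0 then
    -(1 / 12) - HahnSeries.ofPowerSeries ℤ ℚ (PowerSeries.mk fun m => (-1 : ℚ) ^ m * m)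
  else
    HahnSeries.single (-(e : ℤ)) ((-1 : ℚ) ^ (e - 1) * e)
      - ((∑ m ∈ e.properDivisors, HahnSeries.single (-(m : ℤ)) ((-1 : ℚ) ^ m * m))
          - HahnSeries.C (∑ m ∈ e.divisors, 2 * (m : ℚ))
          + ∑ m ∈ e.divisors, HahnSeries.single ((m : ℤ)) ((-1 : ℚ) ^ m * m))

/-- The series `℘(q⁻¹t, t) ∈ ℚ((q))[[t]]`. -/
def wpSub : PowerSeries (LaurentSeries ℚ) := PowerSeries.mk wpSubCoeff

/-- Coefficientwise Laurent expansion at `q = 0`, mapping `ℚ(q)((t))` into `ℚ((q))((t))`. -/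
def iotaL (f : LaurentSeries K) : LaurentSeries (LaurentSeries ℚ) :=
  f.map (@algebraMap (RatFunc ℚ) (LaurentSeries ℚ) _ _ (RatFunc.liftAlgebra ℚ (LaurentSeries ℚ)))


set_option maxRecDepth 8000

namespace Aux

lemma dvd_mul_one_add {k : ℕ} {f g : PowerSeries K} (hf : (X:PowerSeries K)^k ∣ f - 1)
    (hg : (X:PowerSeries K)^k ∣ g - 1) : (X:PowerSeries K)^k ∣ f * g - 1 := by
  have : f * g - 1 = f * (g - 1) + (f - 1) := by ring
  rw [this]
  exact dvd_add (hg.mul_left f) hf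

lemma dvd_pow_one_add {k n : ℕ} {f : PowerSeries K} (hf : (X:PowerSeries K)^k ∣ f - 1) :
    (X:PowerSeries K)^k ∣ f ^ n - 1 := by
  induction n with
  | zero => simp
  | succ n ih => rw [pow_succ]; exact dvd_mul_one_add ih hf

lemma dvd_one_add_CX {k m : ℕ} (hkm : k ≤ m) (a : K) :
    (X:PowerSeries K)^k ∣ (1 + C a * X ^ m) - 1 := by
  simp only [add_sub_cancel_left]
  exact ((pow_dvd_pow (X:PowerSeries K) hkm).mul_left _)

lemma dvd_one_sub_inv {m : ℕ} (hm : 1 ≤ m) :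
    (X:PowerSeries K)^m ∣ ((1 - X ^ m)⁻¹ : PowerSeries K) - 1 := by
  have hc : constantCoeff (1 - X ^ m : PowerSeries K) ≠ 0 := by
    have : (coeff 0) ((1:PowerSeries K) - X ^ m) = 1 := by
      simp [coeff_X_pow]; omega
    rw [← coeff_zero_eq_constantCoeff_apply, this]; norm_num
  have h := PowerSeries.mul_inv_cancel _ hc
  exact ⟨(1 - X^m)⁻¹, by linear_combination h⟩


lemma phiFactor_sub_one {k m : ℕ} (hm : 1 ≤ m) (hk : k ≤ m) :
    (X:PowerSeries K)^k ∣ phiFactor m - 1 := by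
  unfold phiFactor
  exact dvd_mul_one_add (dvd_mul_one_add
      (dvd_pow_one_add (dvd_one_add_CX hk _)) (dvd_pow_one_add (dvd_one_add_CX hk _)))
    (dvd_pow_one_add ((pow_dvd_pow _ hk).trans (dvd_one_sub_inv hm)))

lemma phiSubFactor_sub_one {k m : ℕ} (hm : 1 ≤ m) (hk : k ≤ m - 1) :
    (X:PowerSeries K)^k ∣ phiSubFactor m - 1 := by
  unfold phiSubFactor
  exact dvd_mul_one_add (dvd_mul_one_add
      (dvd_pow_one_add (dvd_one_add_CX (by omega) _))
      (dvd_pow_one_add (dvd_one_add_CX hk _)))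
    (dvd_pow_one_add ((pow_dvd_pow _ (by omega)).trans (dvd_one_sub_inv hm)))

lemma prod_dvd_sub_one {k : ℕ} {s : Finset ℕ} {f : ℕ → PowerSeries K}
    (h : ∀ m ∈ s, (X:PowerSeries K)^k ∣ f m - 1) :
    (X:PowerSeries K)^k ∣ (∏ m ∈ s, f m) - 1 := by
  classical
  induction s using Finset.cons_induction with
  | empty => simp
  | cons a s ha ih =>
      rw [Finset.prod_cons]
      exact dvd_mul_one_add (h a (Finset.mem_cons_self a s))
        (ih fun m hm => h m (Finset.mem_cons_of_mem hm))

lemma coeff_eq_of_dvd {d : ℕ} {f g : PowerSeries K} (h : (X:PowerSeries K)^(d+1) ∣ f - g) :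
    coeff d f = coeff d g := by
  have := (PowerSeries.X_pow_dvd_iff).1 h d (by omega)
  rw [map_sub, sub_eq_zero] at this
  exact this

lemma coeff_mul_right_one {d : ℕ} {f g : PowerSeries K}
    (h : (X:PowerSeries K)^(d+1) ∣ g - 1) : coeff d (f * g) = coeff d f := by
  refine coeff_eq_of_dvd ?_
  have : f * g - f = f * (g - 1) := by ring
  rw [this]
  exact h.mul_left f

lemma Icc_one_eq_Ioc_zero (x : ℕ) : Finset.Icc 1 x = Finset.Ioc 0 x := by
  ext y; simp; omega

lemma phiProd_coeff_stable {d N : ℕ} (hdN : d ≤ N) :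
    coeff d (∏ m ∈ Finset.Icc 1 N, phiFactor m) = coeff d phiProd := by
  rw [phiProd, coeff_mk]
  have hsplit : (∏ m ∈ Finset.Icc 1 N, phiFactor m) =
      (∏ m ∈ Finset.Icc 1 d, phiFactor m) * ∏ m ∈ Finset.Ioc d N, phiFactor m := by
    rw [Icc_one_eq_Ioc_zero, Icc_one_eq_Ioc_zero,
      Finset.prod_Ioc_consecutive _ (Nat.zero_le d) hdN]
  rw [hsplit]
  exact coeff_mul_right_one (prod_dvd_sub_one fun m hm => by
    have hm' := Finset.mem_Ioc.1 hm
    exact phiFactor_sub_one (by omega) (by omega))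


lemma phiSubProd_coeff_stable {d N : ℕ} (hdN : d + 1 ≤ N) :
    coeff d (∏ m ∈ Finset.Icc 1 N, phiSubFactor m) = coeff d phiSubProd := by
  rw [phiSubProd, coeff_mk]
  have hsplit : (∏ m ∈ Finset.Icc 1 N, phiSubFactor m) =
      (∏ m ∈ Finset.Icc 1 (d+1), phiSubFactor m) * ∏ m ∈ Finset.Ioc (d+1) N, phiSubFactor m := by
    rw [Icc_one_eq_Ioc_zero, Icc_one_eq_Ioc_zero,
      Finset.prod_Ioc_consecutive _ (Nat.zero_le (d+1)) hdN]
  rw [hsplit]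
  exact coeff_mul_right_one (prod_dvd_sub_one fun m hm => by
    have hm' := Finset.mem_Ioc.1 hm
    exact phiSubFactor_sub_one (by omega) (by omega))

set_option maxRecDepth 4000 in
lemma one_add_CX_ne_zero {N : ℕ} (hN : 1 ≤ N) (a : K) :
    (1 + C a * X ^ N : PowerSeries K) ≠ 0 := by
  intro h
  have h0 : (coeff 0) (1 + C a * X ^ N : PowerSeries K) = 1 := by
    rw [map_add, PowerSeries.coeff_one, PowerSeries.coeff_C_mul, coeff_X_pow,
      if_neg (by omega : ¬ (0 = N))]
    simp
  rw [h] at h0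
  simp at h0

lemma keyP (N : ℕ) (hN : 1 ≤ N) :
    (∏ m ∈ Finset.Icc 1 N, phiSubFactor m) * (1 + C q⁻¹ * X) ^ 2 * (1 + C q * X ^ N) ^ 2 =
      (∏ m ∈ Finset.Icc 1 N, phiFactor m) * (1 + C q) ^ 2 *
        (1 + C q⁻¹ * X ^ (N + 1)) ^ 2 := by
  induction N, hN using Nat.le_induction with
  | base =>
      simp only [Finset.Icc_self, Finset.prod_singleton, phiFactor, phiSubFactor]
      ring
  | succ N hN ih =>
      rw [Finset.prod_Icc_succ_top (by omega), Finset.prod_Icc_succ_top (by omega)]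
      apply mul_left_cancel₀ (pow_ne_zero 2 (one_add_CX_ne_zero hN q))
      have hsub : phiSubFactor (N+1) =
          (1 + C q⁻¹ * X ^ (N+1+1)) ^ 2 * (1 + C q * X ^ N) ^ 2 *
            ((1 - X ^ (N+1))⁻¹) ^ 4 := by
        rw [phiSubFactor, Nat.add_sub_cancel]
      rw [hsub, phiFactor]
      linear_combination ((1 + C q⁻¹ * X ^ (N + 1 + 1)) ^ 2 * (1 + C q * X ^ N) ^ 2 *
        ((1 - X ^ (N+1))⁻¹) ^ 4 * (1 + C q * X ^ (N+1)) ^ 2) * ih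

lemma starstar :
    (1 + C q⁻¹ * X) ^ 2 * phiSubProd = C ((1 + q) ^ 2) * phiProd := by
  ext d
  have h1 : coeff d ((1 + C q⁻¹ * X) ^ 2 * phiSubProd) =
      coeff d ((1 + C q⁻¹ * X) ^ 2 * ∏ m ∈ Finset.Icc 1 (d+1), phiSubFactor m) := by
    refine coeff_eq_of_dvd ?_
    have : (1 + C q⁻¹ * X) ^ 2 * phiSubProd -
        (1 + C q⁻¹ * X) ^ 2 * ∏ m ∈ Finset.Icc 1 (d+1), phiSubFactor m =
        (1 + C q⁻¹ * X) ^ 2 * (phiSubProd - ∏ m ∈ Finset.Icc 1 (d+1), phiSubFactor m) := by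
      ring
    rw [this]
    refine Dvd.dvd.mul_left ?_ _
    rw [PowerSeries.X_pow_dvd_iff]
    intro e he
    rw [map_sub, sub_eq_zero, ← phiSubProd_coeff_stable (by omega : e + 1 ≤ d + 1)]
  have h2 : coeff d ((1 + C q⁻¹ * X) ^ 2 * ∏ m ∈ Finset.Icc 1 (d+1), phiSubFactor m) =
      coeff d ((∏ m ∈ Finset.Icc 1 (d+1), phiSubFactor m) * (1 + C q⁻¹ * X) ^ 2 *
        (1 + C q * X ^ (d+1)) ^ 2) := by
    rw [show (∏ m ∈ Finset.Icc 1 (d+1), phiSubFactor m) * (1 + C q⁻¹ * X) ^ 2 *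
        (1 + C q * X ^ (d+1)) ^ 2 =
        ((1 + C q⁻¹ * X) ^ 2 * ∏ m ∈ Finset.Icc 1 (d+1), phiSubFactor m) *
        (1 + C q * X ^ (d+1)) ^ 2 from by ring]
    exact (coeff_mul_right_one (dvd_pow_one_add (dvd_one_add_CX le_rfl q))).symm
  have h3 : coeff d ((∏ m ∈ Finset.Icc 1 (d+1), phiFactor m) * (1 + C q) ^ 2 *
        (1 + C q⁻¹ * X ^ (d+1+1)) ^ 2) =
      coeff d ((∏ m ∈ Finset.Icc 1 (d+1), phiFactor m) * (1 + C q) ^ 2) := by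
    exact coeff_mul_right_one (dvd_pow_one_add (dvd_one_add_CX (by omega) _))
  have h4 : coeff d ((∏ m ∈ Finset.Icc 1 (d+1), phiFactor m) * (1 + C q) ^ 2) =
      coeff d (C ((1 + q) ^ 2) * phiProd) := by
    have hC : (C ((1 + q) ^ 2) : PowerSeries K) = (1 + C q) ^ 2 := by
      rw [map_pow, map_add, map_one]
    rw [hC]
    rw [show (∏ m ∈ Finset.Icc 1 (d+1), phiFactor m) * (1 + C q) ^ 2 =
      (1 + C q) ^ 2 * ∏ m ∈ Finset.Icc 1 (d+1), phiFactor m from by ring]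
    rw [PowerSeries.coeff_mul, PowerSeries.coeff_mul]
    refine Finset.sum_congr rfl fun p hp => ?_
    have hmem := Finset.HasAntidiagonal.mem_antidiagonal.1 hp
    rw [phiProd_coeff_stable (by omega : p.2 ≤ d + 1)]
  rw [h1, h2, keyP (d+1) (by omega), h3, h4]


lemma hq0 : q ≠ 0 := RatFunc.X_ne_zero

lemma hqq : q * q⁻¹ = 1 := mul_inv_cancel₀ hq0

/-- Key Laurent-series identity for `φ_{-2,1}(q⁻¹t,t)`. -/
lemma phiSub_eq :
    phiSub = HahnSeries.C (q ^ 2) * HahnSeries.single (-1 : ℤ) (1 : K) *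
      HahnSeries.ofPowerSeries ℤ K phi := by
  have hone : (HahnSeries.single (1 : ℤ) (1 : K)) ≠ 0 :=
    HahnSeries.single_ne_zero one_ne_zero
  apply mul_left_cancel₀ hone
  have hCq : C q * (1 + C q⁻¹ * X) ^ 2 = C q⁻¹ * X ^ 2 + 2 * X + C q := by
    have h : C q * C q⁻¹ = 1 := by rw [← map_mul, hqq, map_one]
    linear_combination (2 * (X:PowerSeries K) + C q⁻¹ * X^2) * h
  have hqs : q ^ 2 * s = q * (1 + q) ^ 2 := by
    rw [s]; linear_combination q * hqq
  -- left side
  have hscal : HahnSeries.single (1 : ℤ) (1 : K) *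
      (HahnSeries.single (1 : ℤ) q⁻¹ + 2 + HahnSeries.single (-1 : ℤ) q) =
      HahnSeries.ofPowerSeries ℤ K (C q⁻¹ * X ^ 2 + 2 * X + C q) := by
    simp only [map_add, map_mul, map_pow, map_ofNat, HahnSeries.ofPowerSeries_C,
      HahnSeries.ofPowerSeries_X, HahnSeries.single_pow, mul_add,
      HahnSeries.single_mul_single, HahnSeries.C_apply, smul_eq_mul]
    norm_num
    rw [mul_comm]
  have hPS : (C q⁻¹ * X ^ 2 + 2 * X + C q) * phiSubProd = C (q ^ 2) * phi := by
    rw [← hCq, mul_assoc, starstar, phi, ← mul_assoc, ← mul_assoc, ← map_mul, ← map_mul,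
      ← hqs]
  rw [phiSub, ← mul_assoc, hscal, ← map_mul, hPS]
  rw [show HahnSeries.single (1:ℤ) (1:K) *
      (HahnSeries.C (q^2) * HahnSeries.single (-1:ℤ) 1 * HahnSeries.ofPowerSeries ℤ K phi) =
      (HahnSeries.single (1:ℤ) (1:K) * HahnSeries.single (-1:ℤ) (1:K)) *
      (HahnSeries.C (q^2) * HahnSeries.ofPowerSeries ℤ K phi) from by ring,
    HahnSeries.single_mul_single]
  rw [show ((1:ℤ) + -1) = 0 from by ring, one_mul, ← HahnSeries.C_apply, HahnSeries.C_one,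
    one_mul, map_mul, HahnSeries.ofPowerSeries_C]



lemma neg_single (a : ℤ) (r : ℚ) :
    -(HahnSeries.single a r) = HahnSeries.single a (-r) := by
  ext g
  by_cases h : g = a
  · simp [h]
  · simp [HahnSeries.coeff_single_of_ne h]

lemma coe_neg_q : ((-q : K) : LaurentSeries ℚ) = HahnSeries.single (1:ℤ) (-1 : ℚ) := by
  rw [map_neg, q, RatFunc.coe_X, neg_single]

lemma coe_negq_pow (m : ℕ) :
    (((-q) ^ m : K) : LaurentSeries ℚ) = HahnSeries.single (m:ℤ) ((-1:ℚ) ^ m) := by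
  rw [map_pow, coe_neg_q, HahnSeries.single_pow]
  norm_num

lemma coe_negq_zpow (m : ℕ) :
    (((-q) ^ (m:ℤ) : K) : LaurentSeries ℚ) = HahnSeries.single (m:ℤ) ((-1:ℚ) ^ m) := by
  rw [zpow_natCast, coe_negq_pow]

lemma coe_negq_zpow_neg (m : ℕ) :
    (((-q) ^ (-(m:ℤ)) : K) : LaurentSeries ℚ) = HahnSeries.single (-(m:ℤ)) ((-1:ℚ) ^ m) := by
  rw [zpow_neg, map_inv₀, coe_negq_zpow,
    HahnSeries.inv_single, ← inv_pow,
    inv_neg, inv_one]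


def u : PowerSeries ℚ := PowerSeries.mk fun m => (-1 : ℚ) ^ m

lemma hu : ((1 + X) * u : PowerSeries ℚ) = 1 := by
  ext n
  rw [add_mul, one_mul, map_add]
  cases n with
  | zero => simp [u]
  | succ n =>
      rw [PowerSeries.coeff_succ_X_mul, u, coeff_mk, coeff_mk, PowerSeries.coeff_one]
      simp [pow_succ]

lemma hXuu : (X * (u * u) : PowerSeries ℚ) = -(PowerSeries.mk fun m => (-1 : ℚ) ^ m * m) := by
  ext n
  cases n with
  | zero => simp
  | succ n =>
      rw [PowerSeries.coeff_succ_X_mul, map_neg, coeff_mk, PowerSeries.coeff_mul]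
      have : ∀ p ∈ Finset.HasAntidiagonal.antidiagonal n,
          coeff p.1 u * coeff p.2 u = (-1 : ℚ) ^ n := by
        intro p hp
        have := Finset.HasAntidiagonal.mem_antidiagonal.1 hp
        rw [u, coeff_mk, coeff_mk, ← pow_add, this]
      rw [Finset.sum_congr rfl this, Finset.sum_const, Finset.Nat.card_antidiagonal,
        nsmul_eq_mul]
      push_cast
      rw [pow_succ]
      ring

lemma coe_one_add_q : (((1 + q) : K) : LaurentSeries ℚ) =
    HahnSeries.ofPowerSeries ℤ ℚ (1 + X) := by
  rw [map_add, map_one, q, RatFunc.coe_X, map_add,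
    HahnSeries.ofPowerSeries_X, (HahnSeries.ofPowerSeries ℤ ℚ).map_one]

lemma coe_one_add_q_ne : (((1 + q) : K) : LaurentSeries ℚ) ≠ 0 := by
  rw [coe_one_add_q]
  intro h
  have := HahnSeries.ofPowerSeries_injective (h.trans (map_zero _).symm)
  have h0 := congrArg (coeff 0) this
  simp at h0

lemma coe_q_div : (((q / (1 + q) ^ 2) : K) : LaurentSeries ℚ) =
    HahnSeries.ofPowerSeries ℤ ℚ (X * (u * u)) := by
  rw [map_div₀, map_pow]
  rw [div_eq_iff (pow_ne_zero 2 coe_one_add_q_ne), coe_one_add_q, ← map_pow, ← map_mul]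
  rw [show ((X * (u * u)) * (1 + X)^2 : PowerSeries ℚ) = X * ((1+X) * u)^2 from by ring, hu,
    one_pow, mul_one, q, RatFunc.coe_X, HahnSeries.ofPowerSeries_X]

lemma coe_wp_coeff (e : ℕ) : (@algebraMap (RatFunc ℚ) (LaurentSeries ℚ) _ _ (RatFunc.liftAlgebra ℚ (LaurentSeries ℚ))) (coeff e wp) = wpSubCoeff e := by
  rw [wp, coeff_mk, wpSubCoeff]
  by_cases he : e = 0
  · rw [if_pos he, if_pos he, map_add, map_neg, map_div₀, map_one, map_ofNat,
      coe_q_div, hXuu, map_neg]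
    ring
  · rw [if_neg he, if_neg he, map_neg, map_sum]
    have hterm : ∀ m : ℕ,
        (@algebraMap (RatFunc ℚ) (LaurentSeries ℚ) _ _ (RatFunc.liftAlgebra ℚ (LaurentSeries ℚ))) ((m : K) * ((-q) ^ (m : ℤ) - 2 + (-q) ^ (-(m : ℤ)))) =
          HahnSeries.single ((m:ℤ)) ((-1:ℚ)^m * m) - HahnSeries.C (2*(m:ℚ))
            + HahnSeries.single (-(m:ℤ)) ((-1:ℚ)^m * m) := by
      intro m
      rw [map_mul, map_add, map_sub, map_natCast, map_ofNat,
        coe_negq_zpow, coe_negq_zpow_neg]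
      have hm : ((m : LaurentSeries ℚ)) = HahnSeries.single (0:ℤ) (m:ℚ) := by
        rw [← HahnSeries.C_apply, map_natCast]
      have h2 : ((2 : LaurentSeries ℚ)) = HahnSeries.single (0:ℤ) (2:ℚ) := by
        rw [← HahnSeries.C_apply, map_ofNat]
      rw [hm, h2, mul_add, mul_sub, HahnSeries.single_mul_single, HahnSeries.single_mul_single,
        HahnSeries.single_mul_single, zero_add, zero_add, zero_add, ← HahnSeries.C_apply,
        mul_comm ((m:ℚ)) ((-1:ℚ)^m), mul_comm ((m:ℚ)) (2:ℚ)]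
    rw [Finset.sum_congr rfl (fun m _ => hterm m), Finset.sum_add_distrib,
      Finset.sum_sub_distrib, ← map_sum]
    obtain ⟨f, rfl⟩ : ∃ f, e = f + 1 := ⟨e - 1, by omega⟩
    rw [← Nat.insert_self_properDivisors he, Finset.sum_insert Nat.self_notMem_properDivisors,
      Finset.sum_insert Nat.self_notMem_properDivisors,
      Finset.sum_insert Nat.self_notMem_properDivisors]
    rw [Nat.add_sub_cancel,
      show ((-1:ℚ)^f * ((f+1:ℕ):ℚ)) = -((-1:ℚ)^(f+1) * ((f+1:ℕ):ℚ)) from by rw [pow_succ]; ring,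
      ← neg_single]
    abel


abbrev rho : K →+* LaurentSeries ℚ := (@algebraMap (RatFunc ℚ) (LaurentSeries ℚ) _ _ (RatFunc.liftAlgebra ℚ (LaurentSeries ℚ)))

lemma iotaL_coeff (f : LaurentSeries K) (n : ℤ) : (iotaL f).coeff n = rho (f.coeff n) := rfl

lemma iotaL_mul (x y : LaurentSeries K) : iotaL (x * y) = iotaL x * iotaL y := by
  unfold iotaL
  exact HahnSeries.map_mul ((@algebraMap (RatFunc ℚ) (LaurentSeries ℚ) _ _ (RatFunc.liftAlgebra ℚ (LaurentSeries ℚ))) : K →ₙ+* LaurentSeries ℚ)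

lemma iotaL_single (a : ℤ) (r : K) :
    iotaL (HahnSeries.single a r) = HahnSeries.single a ((@algebraMap (RatFunc ℚ) (LaurentSeries ℚ) _ _ (RatFunc.liftAlgebra ℚ (LaurentSeries ℚ))) r) := by
  ext g
  rw [iotaL_coeff]
  by_cases h : g = a
  · simp [h]
  · simp [HahnSeries.coeff_single_of_ne h]

lemma iotaL_C (r : K) : iotaL (HahnSeries.C r) = HahnSeries.C ((@algebraMap (RatFunc ℚ) (LaurentSeries ℚ) _ _ (RatFunc.liftAlgebra ℚ (LaurentSeries ℚ))) r) := by
  rw [HahnSeries.C_apply, HahnSeries.C_apply, iotaL_single]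

lemma iotaL_ofPowerSeries (g : PowerSeries K) :
    iotaL (HahnSeries.ofPowerSeries ℤ K g) =
      HahnSeries.ofPowerSeries ℤ (LaurentSeries ℚ) (PowerSeries.map rho g) := by
  ext n : 2
  rw [iotaL_coeff, PowerSeries.coeff_coe, PowerSeries.coeff_coe]
  split_ifs with h
  · exact map_zero rho
  · rw [PowerSeries.coeff_map]

lemma wpSub_map : PowerSeries.map rho wp = wpSub := by
  apply PowerSeries.ext fun e => ?_
  rw [PowerSeries.coeff_map, wpSub, coeff_mk]
  exact coe_wp_coeff e

lemma iotaL_twelve : iotaL 12 = 12 := by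
  rw [show ((12 : LaurentSeries K)) = HahnSeries.C (12 : K) from
      (map_ofNat (HahnSeries.C : K →+* LaurentSeries K) 12).symm,
    iotaL_C, map_ofNat, map_ofNat]

end Aux

open Aux

/-- The elliptic transformation law of `φ₀,₁`:
`φ₀,₁(q⁻¹t, t) := 12 ℘(q⁻¹t, t) ι(φ_{-2,1}(q⁻¹t, t))` equals `q² t⁻¹ ι(φ₀,₁(q, t))`
in `ℚ((q))((t))`. -/
theorem phi01_elliptic_transformation :
    12 * HahnSeries.ofPowerSeries ℤ (LaurentSeries ℚ) wpSub * iotaL phiSub =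
      HahnSeries.C ((@algebraMap (RatFunc ℚ) (LaurentSeries ℚ) _ _ (RatFunc.liftAlgebra ℚ (LaurentSeries ℚ))) (q ^ 2)) *
        HahnSeries.single (-1 : ℤ) (1 : LaurentSeries ℚ) *
        iotaL (HahnSeries.ofPowerSeries ℤ K phi01) := by
  have h1 : HahnSeries.ofPowerSeries ℤ (LaurentSeries ℚ) wpSub =
      iotaL (HahnSeries.ofPowerSeries ℤ K wp) := by
    rw [iotaL_ofPowerSeries, wpSub_map]
  have h01 : iotaL (HahnSeries.ofPowerSeries ℤ K phi01) =
      12 * iotaL (HahnSeries.ofPowerSeries ℤ K wp) * iotaL (HahnSeries.ofPowerSeries ℤ K phi) := by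
    rw [phi01, map_mul, map_mul, iotaL_mul, iotaL_mul, map_ofNat, iotaL_twelve]
  rw [h1, phiSub_eq, iotaL_mul, iotaL_mul, iotaL_C, iotaL_single, map_one, h01]
  ring


end
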